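/- Let A be an f-adic ring and let π : A → A^hd be its Hausdorff quotient. If A⁺ is an open subring of A contained in A° and integrally closed in A, then π(A⁺) is an open subring of A^hd contained in (A^hd)° and integrally closed in A^hd. Conversely, if B⁺ is an open subring of A^hd contained in (A^hd)° and integrally closed in A^hd, then π⁻¹(B⁺) is an open subring of A contained in A° and integrally closed in A. -/

import Mathlib

open Filter Topology

/-- A subset `S` of a topological ring is bounded if for every neighbourhood `U` of `0`
there is a neighbourhood `V` of `0` with `V · S ⊆ U`. -/
def IsBoundedSubset {A : Type*} [CommRing A] [TopologicalSpace A] (S : Set A) : Prop :=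
  ∀ U ∈ 𝓝 (0 : A), ∃ V ∈ 𝓝 (0 : A), ∀ v ∈ V, ∀ s ∈ S, v * s ∈ U

/-- An element of a topological ring is power-bounded if the set of its powers `aⁿ`, `n ≥ 1`,
is bounded. -/
def IsPowerBounded {A : Type*} [CommRing A] [TopologicalSpace A] (a : A) : Prop :=
  IsBoundedSubset {x : A | ∃ n : ℕ, 1 ≤ n ∧ x = a ^ n}

/-- `A°`, the set of power-bounded elements of a topological ring. -/
def powerBounded (A : Type*) [CommRing A] [TopologicalSpace A] : Set A :=
  {a : A | IsPowerBounded a}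

/-- `I₀` is an ideal of definition of the subring `A₀` of the topological ring `A` if it is
finitely generated and its powers form a basis of neighbourhoods of `0` in `A`. -/
def IsIdealOfDefinition {A : Type*} [CommRing A] [TopologicalSpace A]
    (A₀ : Subring A) (I₀ : Ideal A₀) : Prop :=
  I₀.FG ∧ (𝓝 (0 : A)).HasBasis (fun n : ℕ => 1 ≤ n)
    (fun n => ⇑A₀.subtype '' ((I₀ ^ n : Ideal A₀) : Set A₀))

/-- A ring of definition of a topological ring is an open subring admitting an ideal of
definition. -/
def IsRingOfDefinition {A : Type*} [CommRing A] [TopologicalSpace A] (A₀ : Subring A) : Prop :=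
  IsOpen (A₀ : Set A) ∧ ∃ I₀ : Ideal A₀, IsIdealOfDefinition A₀ I₀

/-- A topological commutative ring is f-adic if it admits a ring of definition. -/
def IsFAdic (A : Type*) [CommRing A] [TopologicalSpace A] : Prop :=
  ∃ A₀ : Subring A, IsRingOfDefinition A₀

/-- A subring `S` of `A` is integrally closed in `A` if every element of `A` integral
over `S` lies in `S`. -/
def IsIntegrallyClosedSubring {A : Type*} [CommRing A] (S : Subring A) : Prop :=
  ∀ x : A, IsIntegral S x → x ∈ S

section Aux

variable {A : Type*} [CommRing A] [TopologicalSpace A] [IsTopologicalRing A]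

/-- The closure of the zero ideal is contained in every neighbourhood of `0`. -/
lemma closure_bot_subset {U : Set A} (hU : U ∈ 𝓝 (0 : A)) :
    (((⊥ : Ideal A).closure : Ideal A) : Set A) ⊆ U := by
  intro x hx
  have hx0 : x ∈ closure ({0} : Set A) := by
    simpa [Ideal.coe_closure] using hx
  have hnx : -x ∈ closure ({0} : Set A) := by
    have h1 : -x ∈ (((⊥ : Ideal A).closure : Ideal A) : Set A) := ((⊥ : Ideal A).closure).neg_mem hx
    simpa [Ideal.coe_closure] using h1
  have ht : (fun y : A => y + x) ⁻¹' U ∈ 𝓝 (-x) := by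
    have hcont : Filter.Tendsto (fun y : A => y + x) (𝓝 (-x)) (𝓝 (0 : A)) := by
      have h := (continuous_add_right x).tendsto (-x)
      simpa using h
    exact hcont hU
  rcases mem_closure_iff_nhds.mp hnx _ ht with ⟨z, hz1, hz2⟩
  have hz0 : z = 0 := hz2
  subst hz0
  simpa using hz1

end Aux

theorem statement4 {A : Type*} [CommRing A] [TopologicalSpace A] [IsTopologicalRing A]
    (hA : IsFAdic A) :
    (∀ Aplus : Subring A, IsOpen (Aplus : Set A) → (Aplus : Set A) ⊆ powerBounded A →
      IsIntegrallyClosedSubring Aplus →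
      IsOpen ((Aplus.map (Ideal.Quotient.mk ((⊥ : Ideal A).closure)) :
          Subring (A ⧸ (⊥ : Ideal A).closure)) : Set (A ⧸ (⊥ : Ideal A).closure)) ∧
      ((Aplus.map (Ideal.Quotient.mk ((⊥ : Ideal A).closure)) :
          Subring (A ⧸ (⊥ : Ideal A).closure)) : Set (A ⧸ (⊥ : Ideal A).closure)) ⊆
        powerBounded (A ⧸ (⊥ : Ideal A).closure) ∧
      IsIntegrallyClosedSubring (Aplus.map (Ideal.Quotient.mk ((⊥ : Ideal A).closure)))) ∧
    (∀ Bplus : Subring (A ⧸ (⊥ : Ideal A).closure),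
      IsOpen (Bplus : Set (A ⧸ (⊥ : Ideal A).closure)) →
      (Bplus : Set (A ⧸ (⊥ : Ideal A).closure)) ⊆ powerBounded (A ⧸ (⊥ : Ideal A).closure) →
      IsIntegrallyClosedSubring Bplus →
      IsOpen ((Bplus.comap (Ideal.Quotient.mk ((⊥ : Ideal A).closure)) : Subring A) : Set A) ∧
      ((Bplus.comap (Ideal.Quotient.mk ((⊥ : Ideal A).closure)) : Subring A) : Set A) ⊆
        powerBounded A ∧
      IsIntegrallyClosedSubring (Bplus.comap (Ideal.Quotient.mk ((⊥ : Ideal A).closure)))) := by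
  classical
  clear hA
  set J : Ideal A := (⊥ : Ideal A).closure with hJ
  set B := A ⧸ J with hB
  set π : A →+* B := Ideal.Quotient.mk J with hπ
  have hπcont : Continuous π := continuous_quot_mk
  have hπopen : IsOpenMap π := QuotientRing.isOpenMap_coe J
  have hπsurj : Function.Surjective π := Ideal.Quotient.mk_surjective
  have hπ0 : π 0 = 0 := map_zero π
  have hpre : ∀ U ∈ 𝓝 (0 : B), π ⁻¹' U ∈ 𝓝 (0 : A) := by
    intro U hU
    have : Filter.Tendsto π (𝓝 (0 : A)) (𝓝 (0 : B)) := by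
      simpa [hπ0] using hπcont.tendsto (0 : A)
    exact this hU
  have himg : ∀ W ∈ 𝓝 (0 : A), π '' interior W ∈ 𝓝 (0 : B) := by
    intro W hW
    refine (hπopen _ isOpen_interior).mem_nhds ?_
    exact ⟨0, mem_interior_iff_mem_nhds.mpr hW, hπ0⟩
  constructor
  · intro Aplus hopen hpb hic
    have hJA : (J : Set A) ⊆ (Aplus : Set A) :=
      closure_bot_subset (hopen.mem_nhds Aplus.zero_mem)
    refine ⟨?_, ?_, ?_⟩
    · rw [Subring.coe_map]
      exact hπopen _ hopen
    · rintro b hb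
      rw [Subring.coe_map] at hb
      obtain ⟨a, ha, rfl⟩ := hb
      intro U hU
      obtain ⟨V, hV, hVs⟩ := hpb ha (π ⁻¹' U) (hpre U hU)
      refine ⟨π '' interior V, himg V hV, ?_⟩
      rintro v ⟨w, hw, rfl⟩ s ⟨n, hn, rfl⟩
      have : π w * π a ^ n = π (w * a ^ n) := by rw [map_mul, map_pow]
      rw [this]
      exact hVs w (interior_subset hw) (a ^ n) ⟨n, hn, rfl⟩
    · intro y hy
      rcases subsingleton_or_nontrivial (Aplus.map π) with htriv | hnt
      · have h10 : (1 : B) = 0 := by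
          have : ((1 : Aplus.map π) : B) = ((0 : Aplus.map π) : B) := by
            rw [Subsingleton.elim (1 : Aplus.map π) 0]
          simpa using this
        have : y = 0 := by
          calc y = y * 1 := (mul_one y).symm
          _ = y * 0 := by rw [h10]
          _ = 0 := mul_zero y
        rw [this]; exact (Aplus.map π).zero_mem
      · obtain ⟨q, hqm, hqe⟩ := hy
        obtain ⟨x, rfl⟩ := hπsurj y
        -- replace q by q * X to make the degree positive
        have hq'm : (q * Polynomial.X).Monic := hqm.mul Polynomial.monic_X
        have hqe' : Polynomial.aeval (π x) q = 0 := by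
          rw [Polynomial.aeval_def]; exact hqe
        have hq'e : Polynomial.aeval (π x) (q * Polynomial.X) = 0 := by
          rw [map_mul, hqe', zero_mul]
        -- lift the monic polynomial along the surjection Aplus → Aplus.map π
        let φ : Aplus →+* Aplus.map π :=
          (π.comp Aplus.subtype).codRestrict (Aplus.map π).toSubsemiring
            (fun a => ⟨a, a.2, rfl⟩)
        have hφsurj : Function.Surjective φ := by
          rintro ⟨b, a, ha, rfl⟩
          exact ⟨⟨a, ha⟩, rfl⟩
        have hlift : (q * Polynomial.X) ∈ Polynomial.lifts φ :=
          (Polynomial.mem_lifts _).mpr ((Polynomial.map_surjective φ hφsurj) _)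
        obtain ⟨p, hpmap, hpdeg, hpm⟩ :=
          Polynomial.lifts_and_degree_eq_and_monic hlift hq'm
        have hqne : q ≠ 0 := hqm.ne_zero
        have hdegpos : 0 < p.degree := by
          rw [hpdeg, Polynomial.degree_mul_X]
          have h0 : 0 ≤ q.degree := Polynomial.zero_le_degree_iff.mpr hqne
          calc (0 : WithBot ℕ) < 0 + 1 := by norm_num
          _ ≤ q.degree + 1 := add_le_add_left h0 1
        -- evaluate p at x; the result lies in J hence in Aplus
        set z : A := Polynomial.aeval x p with hz
        have hcomp : ((Aplus.map π).subtype).comp φ = π.comp Aplus.subtype := rfl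
        have hπz : π z = 0 := by
          have : π z = Polynomial.eval₂ ((Aplus.map π).subtype) (π x) (p.map φ) := by
            rw [hz]
            show π (Polynomial.eval₂ (algebraMap Aplus A) x p) = _
            rw [Polynomial.hom_eval₂, Polynomial.eval₂_map, hcomp]
            rfl
          rw [this, hpmap]
          exact hq'e
        have hzA : z ∈ Aplus := hJA (by
          exact (Ideal.Quotient.eq_zero_iff_mem.mp hπz))
        set z' : Aplus := ⟨z, hzA⟩ with hz'
        have hmonic : (p - Polynomial.C z').Monic := by
          rw [sub_eq_add_neg]
          refine hpm.add_of_left ?_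
          calc (-(Polynomial.C z')).degree = (Polynomial.C z').degree := Polynomial.degree_neg _
          _ ≤ 0 := Polynomial.degree_C_le
          _ < p.degree := hdegpos
        have heval : Polynomial.aeval x (p - Polynomial.C z') = 0 := by
          rw [map_sub, Polynomial.aeval_C]
          have : (algebraMap Aplus A) z' = z := rfl
          rw [this, ← hz, sub_self]
        have hxA : x ∈ Aplus := hic x ⟨p - Polynomial.C z', hmonic, heval⟩
        exact ⟨x, hxA, rfl⟩
  · intro Bplus hopen hpb hic
    refine ⟨?_, ?_, ?_⟩
    · rw [Subring.coe_comap]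
      exact hopen.preimage hπcont
    · intro a ha
      rw [Subring.coe_comap] at ha
      have hpa : IsPowerBounded (π a) := hpb ha
      intro U hU
      obtain ⟨W, hW, hWW⟩ := exists_nhds_zero_half hU
      obtain ⟨V', hV', hV's⟩ := hpa (π '' interior W) (himg W hW)
      refine ⟨π ⁻¹' V', hpre V' hV', ?_⟩
      rintro v hv s ⟨n, hn, rfl⟩
      have hmem : π (v * a ^ n) ∈ π '' interior W := by
        rw [map_mul, map_pow]
        exact hV's (π v) hv ((π a) ^ n) ⟨n, hn, rfl⟩
      obtain ⟨w, hw, hweq⟩ := hmem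
      have hdiff : v * a ^ n - w ∈ J := by
        rw [hπ] at hweq
        exact (Ideal.Quotient.eq (I := J)).mp hweq.symm
      have hdiffW : v * a ^ n - w ∈ W := closure_bot_subset hW hdiff
      have : v * a ^ n = w + (v * a ^ n - w) := by ring
      rw [this]
      exact hWW w (interior_subset hw) _ hdiffW
    · intro x hx
      obtain ⟨p, hpm, hpe⟩ := hx
      let ψ : (Bplus.comap π) →+* Bplus :=
        (π.comp (Bplus.comap π).subtype).codRestrict Bplus.toSubsemiring (fun a => a.2)
      have hcomp : (Bplus.subtype).comp ψ = π.comp (Bplus.comap π).subtype := rfl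
      have heval : Polynomial.aeval (π x) (p.map ψ) = 0 := by
        show Polynomial.eval₂ (algebraMap Bplus B) (π x) (p.map ψ) = 0
        rw [Polynomial.eval₂_map]
        have : (algebraMap Bplus B).comp ψ = π.comp (Bplus.comap π).subtype := rfl
        rw [this, ← Polynomial.hom_eval₂]
        show π (Polynomial.aeval x p) = 0
        have hpe' : Polynomial.aeval x p = 0 := by rw [Polynomial.aeval_def]; exact hpe
        rw [hpe', map_zero]
      have : π x ∈ Bplus := hic (π x) ⟨p.map ψ, hpm.map ψ, heval⟩
      exact this
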